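/- Let f(x) = a_n x^n + ⋯ + a_0 be a polynomial of degree n with integer coefficients and let q be an odd prime. Suppose a_0 is not divisible by q and the congruence f(x) ≡ 0 (mod q) has exactly ℓ solutions x in ℤ/qℤ. Then R(f(x), x^{q−1} − 1) ≡ 0 (mod q^ℓ). -/

import Mathlib

open Polynomial

/-- The Sylvester matrix of two integer polynomials `f` (of degree `n = f.natDegree`)
and `g` (of degree `m = g.natDegree`): an `(m + n) × (m + n)` matrix whose first `m`
rows are shifted copies of the coefficients of `f` (in decreasing order of degree)
and whose last `n` rows are shifted copies of the coefficients of `g`. -/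
def sylvesterMatrix (f g : Polynomial ℤ) :
    Matrix (Fin (g.natDegree + f.natDegree)) (Fin (g.natDegree + f.natDegree)) ℤ :=
  Matrix.of fun i j =>
    if (i : ℕ) < g.natDegree then
      if (i : ℕ) ≤ (j : ℕ) ∧ (j : ℕ) ≤ (i : ℕ) + f.natDegree then
        f.coeff (f.natDegree - ((j : ℕ) - (i : ℕ)))
      else 0
    else
      if (i : ℕ) - g.natDegree ≤ (j : ℕ) ∧ (j : ℕ) ≤ ((i : ℕ) - g.natDegree) + g.natDegree then
        g.coeff (g.natDegree - ((j : ℕ) - ((i : ℕ) - g.natDegree)))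
      else 0

/-- The resultant `R(f, g)` of two integer polynomials, i.e. the determinant of their
Sylvester matrix. -/
def resultant (f g : Polynomial ℤ) : ℤ :=
  (sylvesterMatrix f g).det

section RowLemmas

variable {R : Type*} [CommRing R]

lemma sylv_row_aux (φ : ℤ →+* R) (r : R) (p : Polynomial ℤ) (N a : ℕ)
    (ha : a + p.natDegree + 1 ≤ N) (c : ℕ → ℤ)
    (hc : ∀ k ≤ p.natDegree, c (a + k) = p.coeff (p.natDegree - k)) :
    (∑ j ∈ Finset.range N, if j ∈ Finset.Ico a (a + p.natDegree + 1) then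
        φ (c j) * r ^ (N - 1 - j) else 0)
      = r ^ (N - 1 - a - p.natDegree) * p.eval₂ φ r := by
  have hsub : Finset.range N ∩ Finset.Ico a (a + p.natDegree + 1)
      = Finset.Ico a (a + p.natDegree + 1) := by
    apply Finset.inter_eq_right.2
    intro x hx
    simp only [Finset.mem_Ico] at hx
    simp only [Finset.mem_range]
    omega
  rw [Finset.sum_ite_mem, hsub,
    show a + p.natDegree + 1 = a + (p.natDegree + 1) by omega,
    Finset.sum_Ico_eq_sum_range, Nat.add_sub_cancel_left,
    p.eval₂_eq_sum_range, Finset.mul_sum, ← Finset.sum_range_reflect]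
  apply Finset.sum_congr rfl
  intro k hk
  rw [Finset.mem_range] at hk
  rw [show p.natDegree + 1 - 1 - k = p.natDegree - k by omega,
    hc (p.natDegree - k) (by omega),
    show p.natDegree - (p.natDegree - k) = k by omega,
    show N - 1 - (a + (p.natDegree - k)) = (N - 1 - a - p.natDegree) + k by omega, pow_add]
  ring

lemma sylv_row_f (f g : Polynomial ℤ) (φ : ℤ →+* R) (r : R)
    (i : Fin (g.natDegree + f.natDegree)) (hi : (i : ℕ) < g.natDegree) :
    (∑ j : Fin (g.natDegree + f.natDegree),
        φ (sylvesterMatrix f g i j) * r ^ (g.natDegree + f.natDegree - 1 - (j : ℕ)))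
      = r ^ (g.natDegree - 1 - (i : ℕ)) * f.eval₂ φ r := by
  set F : ℕ → R := fun j => if j ∈ Finset.Ico (i : ℕ) ((i : ℕ) + f.natDegree + 1) then
      φ (f.coeff (f.natDegree - (j - (i : ℕ)))) * r ^ (g.natDegree + f.natDegree - 1 - j) else 0
    with hF
  have key : ∀ j : Fin (g.natDegree + f.natDegree),
      φ (sylvesterMatrix f g i j) * r ^ (g.natDegree + f.natDegree - 1 - (j : ℕ)) = F (j : ℕ) := by
    intro j
    simp only [hF, sylvesterMatrix, Matrix.of_apply, if_pos hi, Finset.mem_Ico]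
    by_cases h : (i : ℕ) ≤ (j : ℕ) ∧ (j : ℕ) ≤ (i : ℕ) + f.natDegree
    · rw [if_pos h, if_pos (by omega)]
    · rw [if_neg h, if_neg (by omega), map_zero, zero_mul]
  calc (∑ j : Fin (g.natDegree + f.natDegree),
        φ (sylvesterMatrix f g i j) * r ^ (g.natDegree + f.natDegree - 1 - (j : ℕ)))
      = ∑ j : Fin (g.natDegree + f.natDegree), F (j : ℕ) := Finset.sum_congr rfl fun j _ => key j
    _ = ∑ j ∈ Finset.range (g.natDegree + f.natDegree), F j := Fin.sum_univ_eq_sum_range F _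
    _ = r ^ (g.natDegree - 1 - (i : ℕ)) * f.eval₂ φ r := by
        rw [hF, sylv_row_aux φ r f _ (i : ℕ) (by omega) _ (fun k hk => by congr 1; omega),
          show g.natDegree + f.natDegree - 1 - (i:ℕ) - f.natDegree = g.natDegree - 1 - (i:ℕ) by omega]

lemma sylv_row_g (f g : Polynomial ℤ) (φ : ℤ →+* R) (r : R)
    (i : Fin (g.natDegree + f.natDegree)) (hi : ¬ (i : ℕ) < g.natDegree) :
    (∑ j : Fin (g.natDegree + f.natDegree),
        φ (sylvesterMatrix f g i j) * r ^ (g.natDegree + f.natDegree - 1 - (j : ℕ)))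
      = r ^ (f.natDegree - 1 - ((i : ℕ) - g.natDegree)) * g.eval₂ φ r := by
  have hi2 := i.isLt
  set F : ℕ → R := fun j => if j ∈ Finset.Ico ((i : ℕ) - g.natDegree)
      (((i : ℕ) - g.natDegree) + g.natDegree + 1) then
      φ (g.coeff (g.natDegree - (j - ((i : ℕ) - g.natDegree)))) *
        r ^ (g.natDegree + f.natDegree - 1 - j) else 0
    with hF
  have key : ∀ j : Fin (g.natDegree + f.natDegree),
      φ (sylvesterMatrix f g i j) * r ^ (g.natDegree + f.natDegree - 1 - (j : ℕ)) = F (j : ℕ) := by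
    intro j
    simp only [hF, sylvesterMatrix, Matrix.of_apply, if_neg hi, Finset.mem_Ico]
    by_cases h : (i : ℕ) - g.natDegree ≤ (j : ℕ) ∧ (j : ℕ) ≤ ((i : ℕ) - g.natDegree) + g.natDegree
    · rw [if_pos h, if_pos (by omega)]
    · rw [if_neg h, if_neg (by omega), map_zero, zero_mul]
  calc (∑ j : Fin (g.natDegree + f.natDegree),
        φ (sylvesterMatrix f g i j) * r ^ (g.natDegree + f.natDegree - 1 - (j : ℕ)))
      = ∑ j : Fin (g.natDegree + f.natDegree), F (j : ℕ) := Finset.sum_congr rfl fun j _ => key j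
    _ = ∑ j ∈ Finset.range (g.natDegree + f.natDegree), F j := Fin.sum_univ_eq_sum_range F _
    _ = r ^ (f.natDegree - 1 - ((i : ℕ) - g.natDegree)) * g.eval₂ φ r := by
        rw [hF, sylv_row_aux φ r g _ ((i : ℕ) - g.natDegree) (by omega) _
            (fun k hk => by congr 1; omega),
          show g.natDegree + f.natDegree - 1 - ((i:ℕ) - g.natDegree) - g.natDegree
            = f.natDegree - 1 - ((i:ℕ) - g.natDegree) by omega]

end RowLemmas

section NT

variable (q ℓ : ℕ) [hq : Fact q.Prime] (hℓ : 0 < ℓ)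

lemma zmod_isUnit_of_cast_ne_zero (z : ZMod (q ^ ℓ))
    (hz : ZMod.castHom (dvd_pow_self q hℓ.ne') (ZMod q) z ≠ 0) : IsUnit z := by
  haveI : NeZero (q ^ ℓ) := ⟨pow_ne_zero _ hq.out.ne_zero⟩
  have hzv : ((z.val : ℕ) : ZMod (q ^ ℓ)) = z := ZMod.natCast_rightInverse z
  rw [← hzv]
  rw [ZMod.isUnit_iff_coprime]
  apply Nat.Coprime.pow_right
  rw [Nat.coprime_comm]
  rw [Nat.Prime.coprime_iff_not_dvd hq.out]
  intro hdvd
  apply hz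
  have : (ZMod.castHom (dvd_pow_self q hℓ.ne') (ZMod q)) z = ((z.val : ℕ) : ZMod q) := by
    rw [← hzv]
    simp [map_natCast]
  rw [this, ZMod.natCast_eq_zero_iff]
  exact hdvd

lemma zmod_eq_q_mul_of_cast_eq_zero (z : ZMod (q ^ ℓ))
    (hz : ZMod.castHom (dvd_pow_self q hℓ.ne') (ZMod q) z = 0) :
    ∃ u : ZMod (q ^ ℓ), z = (q : ZMod (q ^ ℓ)) * u := by
  haveI : NeZero (q ^ ℓ) := ⟨pow_ne_zero _ hq.out.ne_zero⟩
  have hzv : ((z.val : ℕ) : ZMod (q ^ ℓ)) = z := ZMod.natCast_rightInverse z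
  have hdvd : q ∣ z.val := by
    rw [← ZMod.natCast_eq_zero_iff]
    rw [← hzv] at hz
    simpa [map_natCast] using hz
  obtain ⟨t, ht⟩ := hdvd
  exact ⟨(t : ZMod (q ^ ℓ)), by rw [← hzv, ht]; push_cast; ring⟩

lemma zmod_exists_root_of_unity_lift (x : ZMod q) (hx : x ≠ 0) :
    ∃ r : ZMod (q ^ ℓ), ZMod.castHom (dvd_pow_self q hℓ.ne') (ZMod q) r = x ∧
      r ^ (q - 1) = 1 := by
  haveI : NeZero (q ^ ℓ) := ⟨pow_ne_zero _ hq.out.ne_zero⟩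
  obtain ⟨k, hk⟩ := ZMod.natCast_zmod_surjective (n := q) x
  set π := ZMod.castHom (dvd_pow_self q hℓ.ne') (ZMod q)
  have hy : π ((k : ZMod (q ^ ℓ))) = x := by rw [map_natCast, hk]
  have hyu : IsUnit ((k : ZMod (q ^ ℓ))) :=
    zmod_isUnit_of_cast_ne_zero q ℓ hℓ _ (by rw [hy]; exact hx)
  obtain ⟨Y, hY⟩ := hyu
  refine ⟨(k : ZMod (q ^ ℓ)) ^ (q ^ (ℓ - 1)), ?_, ?_⟩
  · rw [map_pow, hy, ZMod.pow_card_pow]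
  · have hcard : Fintype.card (ZMod (q ^ ℓ))ˣ = q ^ (ℓ - 1) * (q - 1) := by
      rw [ZMod.card_units_eq_totient, Nat.totient_prime_pow hq.out hℓ]
    have hone := pow_card_eq_one (x := Y)
    rw [hcard] at hone
    calc ((k : ZMod (q ^ ℓ)) ^ (q ^ (ℓ - 1))) ^ (q - 1)
        = (k : ZMod (q ^ ℓ)) ^ (q ^ (ℓ - 1) * (q - 1)) := by rw [← pow_mul]
      _ = ((Y ^ (q ^ (ℓ - 1) * (q - 1)) : (ZMod (q ^ ℓ))ˣ) : ZMod (q ^ ℓ)) := by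
          rw [Units.val_pow_eq_pow_val, hY]
      _ = 1 := by rw [hone, Units.val_one]

end NT

/-- **Theorem 2.** Let `f` be an integer polynomial of degree `n`, `q` an odd prime
with `q ∤ a_0`. If `f(x) ≡ 0 (mod q)` has exactly `ℓ` solutions in `ℤ/qℤ`, then
`R(f(x), x^{q-1} - 1) ≡ 0 (mod q^ℓ)`. -/
theorem resultant_pow_qsub1_dvd (q : ℕ) [Fact q.Prime] (hodd : Odd q)
    (f : Polynomial ℤ) (n : ℕ) (hn : f.natDegree = n)
    (ha0 : ¬ (q : ℤ) ∣ f.coeff 0)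
    (ℓ : ℕ)
    (hℓ : (Finset.univ.filter fun x : ZMod q =>
        (f.map (Int.castRingHom (ZMod q))).eval x = 0).card = ℓ) :
    (q : ℤ) ^ ℓ ∣ _root_.resultant f (X ^ (q - 1) - 1) := by
  rcases Nat.eq_zero_or_pos ℓ with rfl | hℓ0
  · simpa using one_dvd _
  have hqp : q.Prime := Fact.out
  have hq2 : 2 ≤ q := hqp.two_le
  haveI : NeZero (q ^ ℓ) := ⟨pow_ne_zero _ hqp.ne_zero⟩
  set g : Polynomial ℤ := X ^ (q - 1) - 1 with hgdef
  have hm : g.natDegree = q - 1 := by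
    rw [hgdef, show (1 : Polynomial ℤ) = C 1 by rw [map_one], natDegree_X_pow_sub_C]
  set s := (Finset.univ.filter fun x : ZMod q =>
      (f.map (Int.castRingHom (ZMod q))).eval x = 0) with hsdef
  -- 0 is not a solution
  have h0 : (0 : ZMod q) ∉ s := by
    simp only [hsdef, Finset.mem_filter, Finset.mem_univ, true_and]
    rw [eval_map, eval₂_at_zero]
    intro h
    exact ha0 ((ZMod.intCast_zmod_eq_zero_iff_dvd _ _).1 h)
  have hlq : ℓ ≤ q - 1 := by
    have hsub : s ⊆ Finset.univ.erase 0 := fun y hy =>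
      Finset.mem_erase.2 ⟨fun h => h0 (h ▸ hy), Finset.mem_univ y⟩
    have := Finset.card_le_card hsub
    rwa [Finset.card_erase_of_mem (Finset.mem_univ 0), Finset.card_univ, ZMod.card, hℓ] at this
  have hlN : ℓ ≤ g.natDegree + f.natDegree := by omega
  -- enumerate the solutions
  set x : Fin ℓ → ZMod q := fun j => (s.equivFin.symm (Fin.cast hℓ.symm j) : ZMod q) with hxdef
  have hx_mem : ∀ j, x j ∈ s := fun j => (s.equivFin.symm _).2
  have hx_inj : Function.Injective x := by
    intro a b hab
    have h1 := s.equivFin.symm.injective (Subtype.ext hab)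
    exact Fin.cast_injective _ h1
  have hroot : ∀ j, (f.map (Int.castRingHom (ZMod q))).eval (x j) = 0 := by
    intro j
    have := hx_mem j
    rw [hsdef, Finset.mem_filter] at this
    exact this.2
  have hxne : ∀ j, x j ≠ 0 := fun j h => h0 (h ▸ hx_mem j)
  -- lift to roots of unity mod q^ℓ
  set π := ZMod.castHom (dvd_pow_self q hℓ0.ne') (ZMod q) with hπdef
  choose r hπr hr1 using fun j => zmod_exists_root_of_unity_lift q ℓ hℓ0 (x j) (hxne j)
  set φ := Int.castRingHom (ZMod (q ^ ℓ)) with hφdef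
  have hfr : ∀ j, π (f.eval₂ φ (r j)) = 0 := by
    intro j
    rw [hφdef, hom_eval₂]
    have hcomp : π.comp (Int.castRingHom (ZMod (q ^ ℓ))) = Int.castRingHom (ZMod q) :=
      RingHom.ext fun z => by simp
    rw [hcomp, hπr, ← eval_map]
    exact hroot j
  choose u hu using fun j => zmod_eq_q_mul_of_cast_eq_zero q ℓ hℓ0 _ (hfr j)
  have hgr : ∀ j, g.eval₂ φ (r j) = 0 := by
    intro j
    rw [hgdef]
    simp only [eval₂_sub, eval₂_X_pow, eval₂_one]
    rw [hr1 j, sub_self]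
  -- the index equivalence
  have hNN : ℓ + (g.natDegree + f.natDegree - ℓ) = g.natDegree + f.natDegree := by omega
  set e : (Fin ℓ ⊕ Fin (g.natDegree + f.natDegree - ℓ)) ≃ Fin (g.natDegree + f.natDegree) :=
    finSumFinEquiv.trans (finCongr hNN) with hedef
  have he1 : ∀ a : Fin ℓ, ((e (Sum.inl a) : Fin (g.natDegree + f.natDegree)) : ℕ) = (a : ℕ) := by
    intro a
    simp [hedef]
  have he2 : ∀ b : Fin (g.natDegree + f.natDegree - ℓ),
      ((e (Sum.inr b) : Fin (g.natDegree + f.natDegree)) : ℕ) = ℓ + (b : ℕ) := by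
    intro b
    simp [hedef]
  -- matrices
  set S : Matrix (Fin (g.natDegree + f.natDegree)) (Fin (g.natDegree + f.natDegree))
      (ZMod (q ^ ℓ)) := (sylvesterMatrix f g).map ⇑φ with hSdef
  set SS := S.submatrix e e with hSSdef
  set A : Matrix (Fin ℓ) (Fin ℓ) (ZMod (q ^ ℓ)) :=
    Matrix.of fun a j => r j ^ (g.natDegree + f.natDegree - 1 - (a : ℕ)) with hAdef
  set Cm : Matrix (Fin (g.natDegree + f.natDegree - ℓ)) (Fin ℓ) (ZMod (q ^ ℓ)) :=
    Matrix.of fun b j => r j ^ (g.natDegree + f.natDegree - 1 - (ℓ + (b : ℕ))) with hCdef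
  set T := Matrix.fromBlocks A
    (0 : Matrix (Fin ℓ) (Fin (g.natDegree + f.natDegree - ℓ)) (ZMod (q ^ ℓ))) Cm
    (1 : Matrix (Fin (g.natDegree + f.natDegree - ℓ)) (Fin (g.natDegree + f.natDegree - ℓ))
      (ZMod (q ^ ℓ))) with hTdef
  have hT : ∀ (k : Fin ℓ ⊕ Fin (g.natDegree + f.natDegree - ℓ)) (j : Fin ℓ),
      T k (Sum.inl j) = r j ^ (g.natDegree + f.natDegree - 1 -
        ((e k : Fin (g.natDegree + f.natDegree)) : ℕ)) := by
    intro k j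
    cases k with
    | inl a => rw [he1]; simp [hTdef, hAdef]
    | inr b => rw [he2]; simp [hTdef, hCdef]
  -- the column computation
  have hcol : ∀ (i : Fin ℓ ⊕ Fin (g.natDegree + f.natDegree - ℓ)) (j : Fin ℓ),
      (SS * T) i (Sum.inl j) =
        (if ((e i : Fin (g.natDegree + f.natDegree)) : ℕ) < g.natDegree then
          u j * r j ^ (g.natDegree - 1 - ((e i : Fin (g.natDegree + f.natDegree)) : ℕ))
         else 0) * (q : ZMod (q ^ ℓ)) := by
    intro i j
    rw [Matrix.mul_apply]
    have step1 : ∀ k, SS i k * T k (Sum.inl j)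
        = φ (sylvesterMatrix f g (e i) (e k)) * r j ^ (g.natDegree + f.natDegree - 1 -
            ((e k : Fin (g.natDegree + f.natDegree)) : ℕ)) := by
      intro k
      rw [hT]
      rfl
    rw [Finset.sum_congr rfl fun k _ => step1 k]
    rw [Equiv.sum_comp e (fun k' : Fin (g.natDegree + f.natDegree) =>
      φ (sylvesterMatrix f g (e i) k') * r j ^ (g.natDegree + f.natDegree - 1 - (k' : ℕ)))]
    by_cases him : ((e i : Fin (g.natDegree + f.natDegree)) : ℕ) < g.natDegree
    · rw [sylv_row_f f g φ (r j) (e i) him, hu j, if_pos him]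
      ring
    · rw [sylv_row_g f g φ (r j) (e i) him, hgr j, if_neg him, mul_zero, zero_mul]
  -- the diagonal scaling
  set d : (Fin ℓ ⊕ Fin (g.natDegree + f.natDegree - ℓ)) → ZMod (q ^ ℓ) :=
    Sum.elim (fun _ => (q : ZMod (q ^ ℓ))) (fun _ => 1) with hddef
  set M' : Matrix (Fin ℓ ⊕ Fin (g.natDegree + f.natDegree - ℓ))
      (Fin ℓ ⊕ Fin (g.natDegree + f.natDegree - ℓ)) (ZMod (q ^ ℓ)) :=
    Matrix.of fun i k => Sum.elim
      (fun j : Fin ℓ => if ((e i : Fin (g.natDegree + f.natDegree)) : ℕ) < g.natDegree then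
          u j * r j ^ (g.natDegree - 1 - ((e i : Fin (g.natDegree + f.natDegree)) : ℕ)) else 0)
      (fun b => SS i (Sum.inr b)) k with hMdef
  have hST : SS * T = M' * Matrix.diagonal d := by
    ext i k
    cases k with
    | inl j =>
      rw [Matrix.mul_diagonal]
      simp only [hMdef, hddef, Matrix.of_apply, Sum.elim_inl]
      exact hcol i j
    | inr b =>
      rw [Matrix.mul_diagonal]
      simp only [hMdef, hddef, Matrix.of_apply, Sum.elim_inr, mul_one]
      rw [Matrix.mul_apply, Fintype.sum_sum_type]
      simp [hTdef, Matrix.one_apply, mul_ite, Finset.sum_ite_eq']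
  -- determinants
  have hdSS : SS.det * T.det = 0 := by
    rw [← Matrix.det_mul, hST, Matrix.det_mul, Matrix.det_diagonal]
    have hprod : ∏ i, d i = 0 := by
      rw [Fintype.prod_sum_type]
      simp only [hddef, Sum.elim_inl, Sum.elim_inr, Finset.prod_const, Finset.card_univ,
        Fintype.card_fin, one_pow, mul_one]
      rw [← Nat.cast_pow, ZMod.natCast_self]
    rw [hprod, mul_zero]
  -- T has unit determinant
  have hUr : ∀ j, IsUnit (r j) := fun j =>
    zmod_isUnit_of_cast_ne_zero q ℓ hℓ0 _ (by rw [hπr]; exact hxne j)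
  have hUd : ∀ i j : Fin ℓ, i ≠ j → IsUnit (r j - r i) := by
    intro i j hij
    apply zmod_isUnit_of_cast_ne_zero q ℓ hℓ0
    rw [map_sub, hπr, hπr]
    exact sub_ne_zero.2 fun h => hij (hx_inj h).symm
  set W : Matrix (Fin ℓ) (Fin ℓ) (ZMod (q ^ ℓ)) :=
    Matrix.of fun a j => r j ^ (ℓ - 1 - (a : ℕ)) with hWdef
  have hAW : A = W * Matrix.diagonal (fun j => r j ^ (g.natDegree + f.natDegree - ℓ)) := by
    ext a j
    rw [Matrix.mul_diagonal]
    simp only [hAdef, hWdef, Matrix.of_apply]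
    rw [← pow_add]
    congr 1
    have := a.isLt
    omega
  have hWsub : W = ((Matrix.vandermonde r).transpose).submatrix Fin.revPerm id := by
    ext a j
    simp only [hWdef, Matrix.of_apply, Matrix.submatrix_apply, Matrix.transpose_apply,
      Matrix.vandermonde, Matrix.of_apply, id_eq]
    congr 1
    rw [show ((Fin.revPerm a : Fin ℓ) : ℕ) = (Fin.rev a : ℕ) from rfl, Fin.val_rev]
    omega
  have hdetW : IsUnit W.det := by
    rw [hWsub, Matrix.det_permute, Matrix.det_transpose, Matrix.det_vandermonde]
    apply IsUnit.mul
    · rcases Int.units_eq_one_or (Equiv.Perm.sign Fin.revPerm) with h | h <;> rw [h] <;> simp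
    · apply Finset.prod_induction _ IsUnit (fun _ _ => IsUnit.mul) isUnit_one
      intro i _
      apply Finset.prod_induction _ IsUnit (fun _ _ => IsUnit.mul) isUnit_one
      intro j hj
      rw [Finset.mem_Ioi] at hj
      exact hUd i j hj.ne
  have hdetT : IsUnit T.det := by
    rw [hTdef, Matrix.det_fromBlocks_zero₁₂, Matrix.det_one, mul_one, hAW, Matrix.det_mul,
      Matrix.det_diagonal]
    apply hdetW.mul
    apply Finset.prod_induction _ IsUnit (fun _ _ => IsUnit.mul) isUnit_one
    intro j _
    exact (hUr j).pow _
  -- conclude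
  have hSS0 : SS.det = 0 := (IsUnit.mul_left_eq_zero hdetT).1 hdSS
  have hS0 : S.det = 0 := by
    rw [← Matrix.det_submatrix_equiv_self e S]
    exact hSS0
  have hcast : ((_root_.resultant f g : ℤ) : ZMod (q ^ ℓ)) = 0 := by
    have h1 : ((_root_.resultant f g : ℤ) : ZMod (q ^ ℓ)) = S.det := by
      rw [hSdef]
      exact RingHom.map_det φ (sylvesterMatrix f g)
    rw [h1]
    exact hS0
  have hdvd := (ZMod.intCast_zmod_eq_zero_iff_dvd (_root_.resultant f g) (q ^ ℓ)).1 hcast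
  push_cast at hdvd
  exact hdvd
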